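/- arXiv:math/0503743 — 4 statements merged into one kernel-verified Lean document; each statement's English description precedes it below -/
import Mathlib

section
/- Let G be a finite group, p a prime dividing |G|, and G_p a Sylow p-subgroup of G. Let m be an integer with p^m = [G_p : Z(G_p)]. If P is a p-centric subgroup of G contained in G_p (i.e., Z(P) is a Sylow p-subgroup of C_G(P)) and P is not a Sylow p-subgroup of G, then p^m does not divide [N_G(P) : P]. -/
/-- `H` is a Sylow `p`-subgroup of `K` (as subgroups of an ambient group `G`):
`H` is a `p`-subgroup of `K` maximal among `p`-subgroups of `K`. -/
def IsSylowIn {G : Type*} [Group G] (p : ℕ) (H K : Subgroup G) : Prop :=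
  H ≤ K ∧ IsPGroup p H ∧ ∀ Q : Subgroup G, Q ≤ K → IsPGroup p Q → H ≤ Q → Q = H

/-- `P` is `p`-centric in `G`: `P` is a `p`-group and `Z(P) = P ⊓ C_G(P)` is a
Sylow `p`-subgroup of the centralizer `C_G(P)`. -/
def IsPCentric {G : Type*} [Group G] (p : ℕ) (P : Subgroup G) : Prop :=
  IsPGroup p P ∧
    IsSylowIn p (P ⊓ Subgroup.centralizer (P : Set G)) (Subgroup.centralizer (P : Set G))

/-- `P` is principal `p`-radical in `G`: `P` is `p`-centric and
`N_G(P)/(P C_G(P))` has no non-trivial normal `p`-subgroup (stated without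
quotients: any `N_G(P)`-invariant subgroup `Q` with `P C_G(P) ≤ Q ≤ N_G(P)`
whose image mod `P C_G(P)` is a `p`-group equals `P C_G(P)`). -/
def IsPrincipalPRadical {G : Type*} [Group G] (p : ℕ) (P : Subgroup G) : Prop :=
  IsPCentric p P ∧ ∀ Q : Subgroup G,
    P ⊔ Subgroup.centralizer (P : Set G) ≤ Q → Q ≤ Subgroup.normalizer (P : Set G) →
    (∀ n ∈ Subgroup.normalizer (P : Set G), ∀ q ∈ Q, n * q * n⁻¹ ∈ Q) →
    (∀ q ∈ Q, ∃ k : ℕ, q ^ p ^ k ∈ P ⊔ Subgroup.centralizer (P : Set G)) →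
    Q = P ⊔ Subgroup.centralizer (P : Set G)

/-- A group has rank at most 2 at the prime `p`: it contains no elementary
abelian subgroup `(ℤ/p)^3`. -/
def NoRankThree (p : ℕ) (G : Type*) [Group G] : Prop :=
  ¬ ∃ f : Multiplicative (ZMod p × ZMod p × ZMod p) →* G, Function.Injective f

theorem stmt0 {G : Type*} [Group G] [Fintype G] (p m : ℕ) [Fact p.Prime]
    (hdvd : p ∣ Fintype.card G) (Gp : Sylow p G)
    (hm : p ^ m = (Subgroup.center ↥(Gp : Subgroup G)).index)
    (P : Subgroup G) (hle : P ≤ (Gp : Subgroup G)) (hcen : IsPCentric p P)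
    (hns : ¬ ∃ S : Sylow p G, (S : Subgroup G) = P) :
    ¬ (p ^ m ∣ P.relIndex (Subgroup.normalizer (P : Set G))) := by
  intro hdvd2
  obtain ⟨hP, hleC, hZpg, hmax⟩ := hcen
  set C := Subgroup.centralizer (P : Set G) with hC
  set Z := (Subgroup.center ↥(Gp : Subgroup G)).map (Gp : Subgroup G).subtype with hZ
  have hp := (Fact.out : p.Prime)
  -- Z centralizes P
  have hZC : Z ≤ C := by
    rintro z ⟨z', hz', rfl⟩
    intro g hg
    have := Subgroup.mem_center_iff.mp hz' ⟨g, hle hg⟩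
    simpa [Subtype.ext_iff] using congrArg Subtype.val this
  -- Z is a p-group
  have hZp : IsPGroup p Z :=
    (Gp.isPGroup'.to_subgroup (Subgroup.center ↥(Gp:Subgroup G))).map _
  -- Z ≤ normalizer (P ⊓ C)
  have hZn : Z ≤ Subgroup.normalizer ((P ⊓ C : Subgroup G) : Set G) := by
    intro z hz
    rw [Subgroup.mem_normalizer_iff]
    intro g
    constructor <;> intro hg
    · have hcomm := hZC hz g (Subgroup.mem_inf.mp hg).1
      have : z * g * z⁻¹ = g := by rw [← hcomm]; group
      rwa [this]
    · have hcomm := hZC hz _ (Subgroup.mem_inf.mp hg).1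
      have h2 : z * g = z * (z * g * z⁻¹) := by rw [← hcomm]; group
      rw [mul_left_cancel h2]
      exact hg
  have hPCp : IsPGroup p ↥(P ⊓ C) := by
    intro x
    obtain ⟨k, hk⟩ := hP ⟨x.1, (Subgroup.mem_inf.mp x.2).1⟩
    exact ⟨k, by simpa [Subtype.ext_iff] using congrArg Subtype.val hk⟩
  -- the join (P ⊓ C) ⊔ Z is a p-subgroup of C, hence equals P ⊓ C
  have hjoin : (P ⊓ C) ⊔ Z = P ⊓ C := by
    refine hmax _ (sup_le inf_le_right hZC)
      (IsPGroup.to_sup_of_normal_left' hPCp hZp hZn)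
      le_sup_left
  have hZP : Z ≤ P := le_trans (le_trans le_sup_right hjoin.le) inf_le_left
  -- cardinalities
  obtain ⟨k, hk⟩ := IsPGroup.iff_card.mp hP
  obtain ⟨c, hc⟩ := IsPGroup.iff_card.mp hZp
  have hcard_center : Nat.card Z = Nat.card (Subgroup.center ↥(Gp:Subgroup G)) :=
    Nat.card_congr (Subgroup.equivMapOfInjective _ _ (Gp:Subgroup G).subtype_injective).symm.toEquiv
  set n := (Nat.card G).factorization p with hn
  have hGp : Nat.card ↥(Gp : Subgroup G) = p ^ n := Gp.card_eq_multiplicity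
  -- p^m * p^c = p^n
  have hmc : p ^ m * p ^ c = p ^ n := by
    rw [← hc, hcard_center, hm, ← hGp]
    exact Subgroup.index_mul_card _
  have hmcn : m + c = n := by
    have := hmc
    rw [← pow_add] at this
    exact Nat.pow_right_injective hp.two_le this
  -- c ≤ k since Z ≤ P
  have hck : c ≤ k := by
    have : p ^ c ∣ p ^ k := by
      rw [← hc, ← hk]; exact Subgroup.card_dvd_of_le hZP
    exact (Nat.pow_dvd_pow_iff_le_right hp.one_lt).mp this
  -- p^(m+k) divides |G|
  have hNcard : P.relIndex (Subgroup.normalizer (P : Set G)) * Nat.card P = Nat.card ↥(Subgroup.normalizer (P : Set G)) := by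
    have : Nat.card ↥(P.subgroupOf (Subgroup.normalizer (P : Set G))) = Nat.card P :=
      Nat.card_congr (Subgroup.subgroupOfEquivOfLe Subgroup.le_normalizer).toEquiv
    rw [Subgroup.relIndex, ← this]
    exact Subgroup.index_mul_card _
  have hdvdG : p ^ (m + k) ∣ Nat.card G := by
    have h1 : p ^ m * p ^ k ∣ P.relIndex (Subgroup.normalizer (P : Set G)) * Nat.card P := by
      rw [← hk]; exact mul_dvd_mul hdvd2 dvd_rfl
    rw [pow_add]
    exact (h1.trans hNcard.dvd).trans (Subgroup.normalizer (P : Set G)).card_subgroup_dvd_card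
  have hmkn : m + k ≤ n := by
    rw [hn]
    exact (Nat.Prime.pow_dvd_iff_le_factorization hp (Nat.card_pos).ne').mp hdvdG
  -- hence k ≤ c, so k = c and Z = P
  have hkc : k = c := le_antisymm (by omega) hck
  have hZPeq : Z = P := by
    refine Subgroup.eq_of_le_of_card_ge hZP ?_
    rw [hk, hc, hkc]
  -- then Gp centralizes P, so Gp = P ⊓ C = P, contradicting hns
  have hGpC : (Gp : Subgroup G) ≤ C := by
    intro g hg x hx
    rw [← hZPeq] at hx
    obtain ⟨z', hz', rfl⟩ := hx
    have := Subgroup.mem_center_iff.mp hz' ⟨g, hg⟩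
    simpa [Subtype.ext_iff] using (congrArg Subtype.val this).symm
  have hPC : P ≤ C := le_trans hle hGpC
  have hfinal : (Gp : Subgroup G) = P ⊓ C :=
    hmax _ hGpC Gp.isPGroup' (le_trans inf_le_left hle)
  exact hns ⟨Gp, by rw [hfinal, inf_eq_left.mpr hPC]⟩
end

section
/- If P is a proper generalized quaternion subgroup of a generalized quaternion group Q of order 2^n (n ≥ 4), then [N_Q(P) : P] = 2. -/
open QuaternionGroup

private lemma aux_a_inv {q : ℕ} (i : ZMod (2*q)) : (a i)⁻¹ = a (-i) := rfl
private lemma aux_xa_inv {q : ℕ} (i : ZMod (2*q)) : (xa i)⁻¹ = xa ((q : ZMod (2*q)) + i) := rfl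

private lemma aux_a_pow {q : ℕ} (i : ZMod (2*q)) (s : ℕ) :
    (a i)^s = a ((s : ZMod (2*q)) * i) := by
  induction s with
  | zero => rw [pow_zero, Nat.cast_zero, zero_mul, one_def]
  | succ s ih => rw [pow_succ, ih, a_mul_a]; congr 1; push_cast; ring

private lemma aux_a_zpow {q : ℕ} (i : ZMod (2*q)) (z : ℤ) :
    (a i)^z = a ((z : ZMod (2*q)) * i) := by
  cases z with
  | ofNat s => rw [Int.ofNat_eq_natCast, zpow_natCast, aux_a_pow]; push_cast; ring_nf
  | negSucc s =>
      rw [zpow_negSucc, aux_a_pow, aux_a_inv]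
      congr 1
      push_cast [Int.cast_negSucc]
      ring

theorem stmt8 (n : ℕ) (hn : 4 ≤ n) (P : Subgroup (QuaternionGroup (2 ^ (n - 2))))
    (hP : P ≠ ⊤)
    (hquat : ∃ m : ℕ, 3 ≤ m ∧ Nonempty (↥P ≃* QuaternionGroup (2 ^ (m - 2)))) :
    P.relIndex (Subgroup.normalizer (P : Set (QuaternionGroup (2 ^ (n - 2))))) = 2 := by
  obtain ⟨m, hm3, ⟨iso⟩⟩ := hquat
  obtain ⟨u, rfl⟩ : ∃ u, m = u + 3 := ⟨m - 3, by omega⟩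
  obtain ⟨v, rfl⟩ : ∃ v, n = v + 4 := ⟨n - 4, by omega⟩
  clear hn hm3
  haveI : NeZero ((2:ℕ) ^ (v + 2)) := ⟨by positivity⟩
  haveI : NeZero ((2:ℕ) ^ (u + 1)) := ⟨by positivity⟩
  have hcardP : Nat.card ↥P = 2 ^ (u + 3) := by
    rw [Nat.card_congr iso.toEquiv, Nat.card_eq_fintype_card]
    show Fintype.card (QuaternionGroup (2 ^ (u+1))) = _
    rw [QuaternionGroup.card]; ring
  have hcardQ : Nat.card (QuaternionGroup (2 ^ (v + 4 - 2))) = 2 ^ (v + 4) := by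
    show Nat.card (QuaternionGroup (2 ^ (v + 2))) = 2 ^ (v + 4)
    rw [Nat.card_eq_fintype_card, QuaternionGroup.card]; ring
  have hmn : u < v + 1 := by
    by_contra h
    apply hP
    apply Subgroup.eq_top_of_le_card
    rw [hcardQ, hcardP]
    exact Nat.pow_le_pow_right (by norm_num) (by omega)
  obtain ⟨e, rfl⟩ : ∃ e, v = u + e := ⟨v - u, by omega⟩
  clear hmn
  set Q := QuaternionGroup (2 ^ (u + e + 4 - 2)) with hQ
  haveI : NeZero ((2:ℕ) ^ (u + e + 2)) := ⟨by positivity⟩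
  haveI : NeZero ((2:ℕ) * 2 ^ (u + e + 2)) := ⟨by positivity⟩
  haveI : NeZero ((2:ℕ) * 2 ^ (u + e + 4 - 2)) := ⟨by positivity⟩
  -- noncommuting pair in P
  have hnc : ∃ x y : ↥P, x * y ≠ y * x := by
    refine ⟨iso.symm (a 1), iso.symm (xa 0), fun hcomm => ?_⟩
    apply_fun iso at hcomm
    simp only [map_mul, MulEquiv.apply_symm_apply] at hcomm
    rw [a_mul_xa, xa_mul_a] at hcomm
    injection hcomm with h
    rw [zero_sub, zero_add] at h
    have h2 : ((2:ℕ) : ZMod (2*2^(u+1))) = 0 := by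
      push_cast
      linear_combination -h
    rw [ZMod.natCast_eq_zero_iff] at h2
    have h3 := Nat.le_of_dvd (by norm_num) h2
    have h4 : (2:ℕ) ≤ 2^(u+1) := by
      calc (2:ℕ) = 2^1 := rfl
      _ ≤ 2^(u+1) := Nat.pow_le_pow_right (by norm_num) (by omega)
    omega
  have hj0 : ∃ j0, xa j0 ∈ P := by
    by_contra hcon
    push_neg at hcon
    obtain ⟨x, y, hxy⟩ := hnc
    apply hxy
    apply Subtype.ext
    show (x:Q) * y = (y:Q) * x
    rcases hxv : (x : Q) with i | i
    · rcases hyv : (y : Q) with j | j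
      · rw [a_mul_a, a_mul_a]
        exact congrArg a (add_comm i j)
      · exact absurd (hyv ▸ y.2) (hcon j)
    · exact absurd (hxv ▸ x.2) (hcon i)
  have hj0' : ∃ j0 : ZMod (2*2^(u+e+2)), xa j0 ∈ P := hj0
  clear hj0
  obtain ⟨j0, hj0⟩ := hj0'
  have memX : ∀ i : ZMod (2*2^(u+e+2)), xa i ∈ P ↔ a (i - j0) ∈ P := by
    intro i
    constructor
    · intro h
      have hm := P.mul_mem (P.inv_mem hj0) h
      rw [aux_xa_inv, xa_mul_xa] at hm
      rwa [show ((2 ^ (u + e + 2) : ℕ) : ZMod (2 * 2 ^ (u + e + 2)))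
        + i - (((2 ^ (u + e + 2) : ℕ) : ZMod (2 * 2 ^ (u + e + 2))) + j0) = i - j0
        from by ring] at hm
    · intro h
      have hm := P.mul_mem hj0 h
      rwa [xa_mul_a, show j0 + (i - j0) = i from by ring] at hm
  -- forward direction of the characterization
  have fwd : ∀ i : ZMod (2 * 2 ^ (u + e + 2)), a i ∈ P →
      ((2^(u+2) : ℕ) : ZMod (2 * 2 ^ (u + e + 2))) * i = 0 := by
    intro i hi
    have hdvd : orderOf (a i : Q) ∣ 2 ^ (u + 3) := by
      rw [← hcardP]
      exact Subgroup.orderOf_dvd_natCard P hi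
    have hne : orderOf (a i : Q) ≠ 2 ^ (u + 3) := by
      intro horder
      have hle : Subgroup.zpowers (a i : Q) ≤ P := Subgroup.zpowers_le.mpr hi
      have hez : (Subgroup.zpowers (a i : Q) : Set Q) = (P : Set Q) := by
        apply Set.eq_of_subset_of_ncard_le hle
        · have c1 : (P : Set Q).ncard = 2^(u+3) := by
            rw [← Nat.card_coe_set_eq]; exact hcardP
          have c2 : ((Subgroup.zpowers (a i : Q) : Subgroup Q) : Set Q).ncard = 2^(u+3) := by
            rw [← Nat.card_coe_set_eq]
            exact (Nat.card_zpowers _).trans horder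
          rw [c1, c2]
      have hmem : xa j0 ∈ Subgroup.zpowers (a i : Q) := by
        rw [← SetLike.mem_coe, hez]; exact hj0
      obtain ⟨z, hz⟩ := Subgroup.mem_zpowers_iff.mp hmem
      rw [aux_a_zpow] at hz
      exact nomatch hz
    obtain ⟨j, hj, hoj⟩ := (Nat.dvd_prime_pow Nat.prime_two).mp hdvd
    have hj2 : j ≤ u + 2 := by
      rcases Nat.lt_or_ge j (u + 3) with h | h
      · omega
      · exfalso; apply hne; rw [hoj]; congr 1; omega
    have hpow : (a i : Q) ^ ((2:ℕ)^(u+2)) = 1 := by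
      apply orderOf_dvd_iff_pow_eq_one.mp
      rw [hoj]
      exact pow_dvd_pow 2 hj2
    rw [aux_a_pow, one_def] at hpow
    injection hpow
  -- counting
  have hSx_eq : {i : ZMod (2*2^(u+e+2)) | xa i ∈ P} = (fun i => j0 + i) '' {i | a i ∈ P} := by
    ext w
    simp only [Set.mem_setOf_eq, Set.mem_image]
    constructor
    · intro hw; exact ⟨w - j0, (memX w).mp hw, by ring⟩
    · rintro ⟨w', hw', rfl⟩
      rw [memX]
      rwa [show j0 + w' - j0 = w' from by ring]
  have hinj_a : Function.Injective (a : ZMod (2*2^(u+e+2)) → Q) := fun x y h => by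
    injection h
  have hinj_xa : Function.Injective (xa : ZMod (2*2^(u+e+2)) → Q) := fun x y h => by
    injection h
  have hPdecomp : (P : Set Q) =
      a '' {i : ZMod (2*2^(u+e+2)) | a i ∈ P} ∪ xa '' {i : ZMod (2*2^(u+e+2)) | xa i ∈ P} := by
    ext g
    rcases g with i | i
    · simp only [Set.mem_union, Set.mem_image, Set.mem_setOf_eq, SetLike.mem_coe]
      constructor
      · intro h; exact Or.inl ⟨i, h, rfl⟩
      · rintro (⟨w, hw, hwe⟩ | ⟨w, hw, hwe⟩)
        · injection hwe with h'; rwa [← h']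
        · exact nomatch hwe
    · simp only [Set.mem_union, Set.mem_image, Set.mem_setOf_eq, SetLike.mem_coe]
      constructor
      · intro h; exact Or.inr ⟨i, h, rfl⟩
      · rintro (⟨w, hw, hwe⟩ | ⟨w, hw, hwe⟩)
        · exact nomatch hwe
        · injection hwe with h'; rwa [← h']
  have hdisj : Disjoint (a '' {i : ZMod (2*2^(u+e+2)) | a i ∈ P})
      (xa '' {i : ZMod (2*2^(u+e+2)) | xa i ∈ P}) := by
    rw [Set.disjoint_left]
    rintro g ⟨w, hw, rfl⟩ ⟨w', hw', hwe⟩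
    exact nomatch hwe
  have hSa : ({i : ZMod (2*2^(u+e+2)) | a i ∈ P}).ncard = 2^(u+2) := by
    have hPn : (P : Set Q).ncard = 2^(u+3) := by
      rw [← Nat.card_coe_set_eq]; exact hcardP
    rw [hPdecomp, Set.ncard_union_eq hdisj, Set.ncard_image_of_injective _ hinj_a,
      Set.ncard_image_of_injective _ hinj_xa, hSx_eq,
      Set.ncard_image_of_injective _ (add_right_injective j0)] at hPn
    have h23 : (2:ℕ)^(u+3) = 2^(u+2) + 2^(u+2) := by ring
    rw [h23] at hPn
    omega
  have hTcard : ({i : ZMod (2*2^(u+e+2)) |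
      ((2^(u+2) : ℕ) : ZMod (2 * 2 ^ (u + e + 2))) * i = 0}).ncard ≤ 2^(u+2) := by
    have hdvdval : ∀ x : ZMod (2*2^(u+e+2)),
        ((2^(u+2) : ℕ) : ZMod (2 * 2 ^ (u + e + 2))) * x = 0 → (2:ℕ)^(e+1) ∣ x.val := by
      intro x hx
      have h1 : ((2^(u+2) * x.val : ℕ) : ZMod (2*2^(u+e+2))) = 0 := by
        rw [Nat.cast_mul, ZMod.natCast_zmod_val]
        exact hx
      rw [ZMod.natCast_eq_zero_iff] at h1
      have hMeq : (2:ℕ)*2^(u+e+2) = 2^(u+2)*2^(e+1) := by ring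
      refine (mul_dvd_mul_iff_left (a := (2:ℕ)^(u+2)) (by positivity)).mp ?_
      rw [← hMeq]
      exact h1
    have := Set.ncard_le_ncard_of_injOn
      (s := {i : ZMod (2*2^(u+e+2)) | ((2^(u+2) : ℕ) : ZMod (2 * 2 ^ (u + e + 2))) * i = 0})
      (f := fun x : ZMod (2*2^(u+e+2)) => (⟨x.val / 2^(e+1), by
        apply Nat.div_lt_of_lt_mul
        calc x.val < 2*2^(u+e+2) := ZMod.val_lt x
        _ = 2^(e+1) * 2^(u+2) := by ring⟩ : Fin (2^(u+2))))
      (t := (Set.univ : Set (Fin (2^(u+2)))))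
      (fun x _ => Set.mem_univ _)
      (by
        intro x hx y hy hxy
        simp only [Set.mem_setOf_eq] at hx hy
        have hx' := hdvdval x hx
        have hy' := hdvdval y hy
        have : x.val = y.val := by
          have h1 : x.val / 2^(e+1) = y.val / 2^(e+1) := congrArg Fin.val hxy
          obtain ⟨cx, hcx⟩ := hx'
          obtain ⟨cy, hcy⟩ := hy'
          rw [hcx, hcy] at h1 ⊢
          rw [Nat.mul_div_cancel_left _ (by positivity), Nat.mul_div_cancel_left _ (by positivity)] at h1
          rw [h1]
        exact ZMod.val_injective _ this)
      (Set.finite_univ)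
    rwa [Set.ncard_univ, Nat.card_eq_fintype_card, Fintype.card_fin] at this
  have keyset : {i : ZMod (2*2^(u+e+2)) | a i ∈ P} =
      {i : ZMod (2*2^(u+e+2)) | ((2^(u+2) : ℕ) : ZMod (2 * 2 ^ (u + e + 2))) * i = 0} := by
    apply Set.eq_of_subset_of_ncard_le ?_ ?_ (Set.toFinite _)
    · intro i hi; exact fwd i hi
    · rw [hSa]; exact hTcard
  have memA : ∀ i : ZMod (2*2^(u+e+2)),
      a i ∈ P ↔ ((2^(u+2) : ℕ) : ZMod (2 * 2 ^ (u + e + 2))) * i = 0 := by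
    intro i
    constructor
    · intro h; exact fwd i h
    · intro h
      have : i ∈ {i : ZMod (2*2^(u+e+2)) |
        ((2^(u+2) : ℕ) : ZMod (2 * 2 ^ (u + e + 2))) * i = 0} := h
      rw [← keyset] at this
      exact this
  -- the coset representative
  set t : ZMod (2*2^(u+e+2)) := ((2^e : ℕ) : ZMod (2*2^(u+e+2))) with ht
  have hfin : ((2^(u+2) : ℕ) : ZMod (2*2^(u+e+2))) * t = ((2^(u+e+2) : ℕ) : ZMod (2*2^(u+e+2))) := by
    rw [ht, ← Nat.cast_mul]
    congr 1
    ring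
  have h2K : (2 : ZMod (2*2^(u+e+2))) * ((2^(u+e+2) : ℕ) : ZMod (2*2^(u+e+2))) = 0 := by
    rw [show ((2 : ZMod (2*2^(u+e+2)))) = ((2:ℕ) : ZMod (2*2^(u+e+2))) from by push_cast; ring,
      ← Nat.cast_mul]
    exact ZMod.natCast_self _
  have hKpos : (0:ℕ) < 2^(u+e+2) := by positivity
  have hcnotP : a (-t) ∉ P := by
    intro hmem
    rw [memA] at hmem
    have hzero : ((2^(u+e+2) : ℕ) : ZMod (2*2^(u+e+2))) = 0 := by linear_combination -hmem - hfin
    rw [ZMod.natCast_eq_zero_iff] at hzero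
    have := Nat.le_of_dvd hKpos hzero
    omega
  have hznorm : ∀ y : ZMod (2*2^(u+e+2)),
      2 * (((2^(u+2) : ℕ) : ZMod (2*2^(u+e+2))) * y) = 0 →
      ((2^(u+2) : ℕ) : ZMod (2*2^(u+e+2))) * y ≠ 0 →
      ((2^(u+2) : ℕ) : ZMod (2*2^(u+e+2))) * (y - t) = 0 := by
    intro y h2 h0
    set z := ((2^(u+2) : ℕ) : ZMod (2*2^(u+e+2))) * y with hz
    have hzval : ((2 * z.val : ℕ) : ZMod (2*2^(u+e+2))) = 0 := by
      rw [Nat.cast_mul, ZMod.natCast_zmod_val]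
      push_cast
      exact h2
    rw [ZMod.natCast_eq_zero_iff] at hzval
    obtain ⟨c, hc⟩ := hzval
    have hzv : z.val = 2^(u+e+2)*c := by
      apply Nat.eq_of_mul_eq_mul_left (show 0 < 2 by norm_num)
      rw [hc]; ring
    have hlt : z.val < 2*2^(u+e+2) := ZMod.val_lt z
    have hc1 : c = 1 := by
      rcases c with _|_|c
      · exfalso
        apply h0
        apply (ZMod.val_eq_zero z).mp
        omega
      · rfl
      · exfalso
        have : 2^(u+e+2)*2 ≤ 2^(u+e+2)*(c+1+1) := Nat.mul_le_mul_left _ (by omega)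
        omega
    have hzK : z = ((2^(u+e+2) : ℕ) : ZMod (2*2^(u+e+2))) := by
      rw [← ZMod.natCast_zmod_val z, hzv, hc1, mul_one]
    linear_combination hzK - hfin
  have hnormA : ∀ j : ZMod (2*2^(u+e+2)), (a j ∈ P ↔ a (-t) * a j * (a (-t))⁻¹ ∈ P) := by
    intro j
    have hc : a (-t) * a j * (a (-t))⁻¹ = a j := by
      rw [aux_a_inv, a_mul_a, a_mul_a]
      exact congrArg a (by ring)
    rw [hc]
  have hnormX : ∀ j : ZMod (2*2^(u+e+2)), (xa j ∈ P ↔ a (-t) * xa j * (a (-t))⁻¹ ∈ P) := by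
    intro j
    have hc : a (-t) * xa j * (a (-t))⁻¹ = xa (j + 2*t) := by
      rw [aux_a_inv, a_mul_xa, xa_mul_a]
      exact congrArg xa (by ring)
    rw [hc, memX, memX, memA, memA]
    constructor
    · intro h; linear_combination h + 2*hfin + h2K
    · intro h; linear_combination h - 2*hfin - h2K
  have hcnorm : a (-t) ∈ (Subgroup.normalizer (P : Set Q)) := by
    rw [Subgroup.mem_normalizer_iff]
    intro g
    rcases g with j | j
    · exact hnormA j
    · exact hnormX j
  have hdichA : ∀ i : ZMod (2*2^(u+e+2)), a i ∈ (Subgroup.normalizer (P : Set Q)) → a i ∉ P →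
      a i * a (-t) ∈ P := by
    intro i hg hgP
    have hconj := (Subgroup.mem_normalizer_iff.mp hg (xa j0)).mp hj0
    rw [aux_a_inv, a_mul_xa, xa_mul_a, memX, memA] at hconj
    have h2 : 2 * (((2^(u+2) : ℕ) : ZMod (2*2^(u+e+2))) * i) = 0 := by linear_combination -hconj
    have h0 : ((2^(u+2) : ℕ) : ZMod (2*2^(u+e+2))) * i ≠ 0 := fun hcon => hgP ((memA i).mpr hcon)
    have hres := hznorm i h2 h0
    rw [a_mul_a, memA]
    linear_combination hres
  have hdichX : ∀ i : ZMod (2*2^(u+e+2)), xa i ∈ (Subgroup.normalizer (P : Set Q)) → xa i ∉ P →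
      xa i * a (-t) ∈ P := by
    intro i hg hgP
    have hconj := (Subgroup.mem_normalizer_iff.mp hg (xa j0)).mp hj0
    rw [aux_xa_inv, xa_mul_xa, a_mul_xa, memX, memA] at hconj
    have h2 : 2 * (((2^(u+2) : ℕ) : ZMod (2*2^(u+e+2))) * (i - j0)) = 0 := by
      linear_combination hconj
    have h0 : ((2^(u+2) : ℕ) : ZMod (2*2^(u+e+2))) * (i - j0) ≠ 0 :=
      fun hcon => hgP ((memX i).mpr ((memA _).mpr hcon))
    have hres := hznorm (i - j0) h2 h0
    rw [xa_mul_a, memX, memA]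
    linear_combination hres
  have hdich : ∀ g : Q, g ∈ (Subgroup.normalizer (P : Set Q)) → g ∉ P → g * (a (-t) : Q) ∈ P := by
    intro g
    rcases g with i | i
    · exact fun hg hgP => hdichA i hg hgP
    · exact fun hg hgP => hdichX i hg hgP
  show (P.subgroupOf (Subgroup.normalizer (P : Set Q))).index = 2
  rw [Subgroup.index_eq_two_iff]
  refine ⟨⟨a (-t), hcnorm⟩, ?_⟩
  rintro ⟨g, hg⟩
  by_cases hgP : g ∈ P
  · refine Or.inr ⟨Subgroup.mem_subgroupOf.mpr hgP, ?_⟩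
    intro hb
    have hb' : g * (a (-t) : Q) ∈ P := Subgroup.mem_subgroupOf.mp hb
    apply hcnotP
    have hfin2 := P.mul_mem (P.inv_mem hgP) hb'
    rw [← mul_assoc, inv_mul_cancel, one_mul] at hfin2
    exact hfin2
  · refine Or.inl ⟨?_, fun hb => hgP (Subgroup.mem_subgroupOf.mp hb)⟩
    apply Subgroup.mem_subgroupOf.mpr
    exact hdich g hg hgP
end

section
/- Let G be a finite group, p a prime, G_p a Sylow p-subgroup, and suppose P ⊆ G_p satisfies: P = G_p ∩ Q is a tame intersection for some Sylow p-subgroup Q of G (meaning N_{G_p}(P) and N_Q(P) are Sylow p-subgroups of N_G(P)), and C_{G_p}(P) ⊆ P. Then P is p-centric in G, i.e., Z(P) is a Sylow p-subgroup of C_G(P). -/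
open Pointwise

theorem stmt15 {G : Type*} [Group G] [Fintype G] (p : ℕ) [Fact p.Prime]
    (Gp Q : Sylow p G) (P : Subgroup G)
    (hP : P = (Gp : Subgroup G) ⊓ (Q : Subgroup G))
    (htame1 : IsSylowIn p ((Gp : Subgroup G) ⊓ Subgroup.normalizer (P : Set G)) (Subgroup.normalizer (P : Set G)))
    (htame2 : IsSylowIn p ((Q : Subgroup G) ⊓ Subgroup.normalizer (P : Set G)) (Subgroup.normalizer (P : Set G)))
    (hcent : (Gp : Subgroup G) ⊓ Subgroup.centralizer (P : Set G) ≤ P) :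
    IsPCentric p P := by
  classical
  set C := Subgroup.centralizer (P : Set G) with hCdef
  set N := Subgroup.normalizer (P : Set G) with hNdef
  have hPG : P ≤ (Gp : Subgroup G) := hP ▸ inf_le_left
  have hPp : IsPGroup p P := Gp.isPGroup'.to_le hPG
  have hfix : ∀ c ∈ C, ∀ h ∈ P, c * h * c⁻¹ = h := by
    intro c hc h hh
    have e := Subgroup.mem_centralizer_iff.mp hc h hh
    rw [← e]; group
  have hCN : C ≤ N := by
    intro c hc
    rw [hNdef, Subgroup.mem_normalizer_iff]
    intro h
    constructor
    · intro hh; rw [hfix c hc h hh]; exact hh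
    · intro hh
      have h1 := hfix c⁻¹ (inv_mem hc) _ hh
      have h2 : c⁻¹ * (c * h * c⁻¹) * c⁻¹⁻¹ = h := by group
      rw [h2] at h1
      rw [h1]; exact hh
  refine ⟨hPp, inf_le_right, hPp.to_le inf_le_left, ?_⟩
  intro R hRC hRp hZR
  have hRN : R ≤ N := hRC.trans hCN
  -- P ⊔ R is a p-group inside N
  have hS'p : IsPGroup p (P ⊔ R : Subgroup G) := hPp.to_sup_of_normal_left' hRp hRN
  have hS'N : P ⊔ R ≤ N := sup_le Subgroup.le_normalizer hRN
  -- Gp ⊓ N corresponds to a Sylow p-subgroup of N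
  have hGpNp : IsPGroup p ((Gp : Subgroup G) ⊓ N : Subgroup G) := Gp.isPGroup'.to_le inf_le_left
  have hleN : (Gp : Subgroup G) ⊓ N ≤ N := inf_le_right
  obtain ⟨T0, hT0⟩ :=
    (hGpNp.of_equiv (Subgroup.subgroupOfEquivOfLe hleN).symm).exists_le_sylow
  have hmapT0 : Subgroup.map N.subtype (T0 : Subgroup N) = (Gp : Subgroup G) ⊓ N := by
    refine htame1.2.2 _ ?_ (T0.isPGroup'.map _) ?_
    · exact Subgroup.map_subtype_le _
    · have := Subgroup.map_mono (f := N.subtype) hT0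
      rwa [Subgroup.subgroupOf_map_subtype, inf_eq_left.mpr inf_le_right] at this
  obtain ⟨T, hT⟩ :=
    (hS'p.of_equiv (Subgroup.subgroupOfEquivOfLe hS'N).symm).exists_le_sylow
  obtain ⟨g, hg⟩ := MulAction.exists_smul_eq (↥N) T0 T
  refine le_antisymm ?_ hZR
  intro r hrR
  have hrC : r ∈ C := hRC hrR
  have hrN : r ∈ N := hRN hrR
  have hrT : (⟨r, hrN⟩ : ↥N) ∈ (T : Subgroup N) := by
    apply hT
    simpa [Subgroup.mem_subgroupOf] using (le_sup_right : R ≤ P ⊔ R) hrR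
  rw [← hg, Sylow.smul_def, Sylow.pointwise_smul_def,
    Subgroup.mem_pointwise_smul_iff_inv_smul_mem] at hrT
  set x : G := (g : G) with hxdef
  have hxN : (x : G) ∈ N := g.2
  have hxP : ∀ h : G, h ∈ P ↔ x * h * x⁻¹ ∈ P := Subgroup.mem_normalizer_iff.mp hxN
  -- x⁻¹ * r * x ∈ Gp
  have hconj : x⁻¹ * r * x ∈ (Gp : Subgroup G) ⊓ N := by
    rw [← hmapT0]
    refine ⟨_, hrT, ?_⟩
    simp [Subgroup.coe_subtype, x]
  -- x⁻¹ * r * x ∈ C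
  have hconjC : x⁻¹ * r * x ∈ C := by
    rw [Subgroup.mem_centralizer_iff]
    intro a ha
    have key := Subgroup.mem_centralizer_iff.mp hrC _ ((hxP a).mp ha)
    have h1 : a * (x⁻¹ * r * x) = x⁻¹ * ((x * a * x⁻¹) * r) * x := by group
    rw [h1, key]; group
  -- hence x⁻¹ * r * x ∈ P, so r ∈ P
  have hconjP : x⁻¹ * r * x ∈ P := hcent ⟨hconj.1, hconjC⟩
  have hrP : r ∈ P := by
    have h3 := (hxP (x⁻¹ * r * x)).mp hconjP
    rw [show x * (x⁻¹ * r * x) * x⁻¹ = r by group] at h3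
    exact h3
  exact ⟨hrP, hrC⟩
end

section
/- Let G be a finite group, p a prime, and G_p a Sylow p-subgroup. Suppose χ: G_p → ℂ is a class function on G_p that 'respects fusion in G' (χ(a) = χ(b) whenever a, b ∈ G_p are conjugate in G). If F is a weak conjugation family for (G, G_p) consisting of pairs (H, N_G(H)) such that for each (H,N_G(H)) ∈ F the restriction χ|_H is invariant under N_G(H)-conjugation and χ is invariant under N_G(G_p)-conjugation, then χ is determined on G-conjugacy classes; conversely, if χ|_H respects fusion in N_G(H) for every (H, N_G(H)) in a weak conjugation family and χ respects fusion in N_G(G_p), then χ respects fusion in G. -/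
/-- `F` is a weak conjugation family for `(G, Gp)` with pairs `(H, N_G(H))` for
`H ∈ F`: whenever `A, B ⊆ Gp` with `B = g⁻¹ A g` for some `g ∈ G`, the
conjugation can be realized by a chain of conjugations by elements
`xᵢ ∈ N_G(Hᵢ)` with `Hᵢ ∈ F`, followed by an element `y ∈ N_G(Gp)`, with the
successive conjugates of `A` contained in the corresponding `Hᵢ`. -/
def IsWeakConjFamily {G : Type*} [Group G] (Gp : Subgroup G)
    (F : Set (Subgroup G)) : Prop :=
  (∀ H ∈ F, H ≤ Gp) ∧
  ∀ A B : Set G, A ⊆ (Gp : Set G) → B ⊆ (Gp : Set G) →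
    (∃ g : G, B = (fun a => g⁻¹ * a * g) '' A) →
    ∃ (l : List (Subgroup G × G)) (y : G),
      (∀ pr ∈ l, pr.1 ∈ F ∧ pr.2 ∈ Subgroup.normalizer (pr.1 : Set G)) ∧
      y ∈ Subgroup.normalizer (Gp : Set G) ∧
      B = (fun a => ((l.map Prod.snd).prod * y)⁻¹ * a * ((l.map Prod.snd).prod * y)) '' A ∧
      ∀ i (hi : i < l.length),
        (fun a => ((l.map Prod.snd).take i).prod⁻¹ * a * ((l.map Prod.snd).take i).prod) '' A
          ⊆ ((l.get ⟨i, hi⟩).1 : Set G)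


private lemma chain_aux {G : Type*} [Group G] (χ : G → ℂ) (F : Set (Subgroup G))
    (hH : ∀ H ∈ F, ∀ a ∈ H, ∀ b ∈ H,
      (∃ g ∈ Subgroup.normalizer (H : Set G), g⁻¹ * a * g = b) → χ a = χ b) :
    ∀ (l : List (Subgroup G × G)) (a : G),
      (∀ pr ∈ l, pr.1 ∈ F ∧ pr.2 ∈ Subgroup.normalizer (pr.1 : Set G)) →
      (∀ i (hi : i < l.length),
        ((l.map Prod.snd).take i).prod⁻¹ * a * ((l.map Prod.snd).take i).prod
          ∈ (l.get ⟨i, hi⟩).1) →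
      χ a = χ ((l.map Prod.snd).prod⁻¹ * a * (l.map Prod.snd).prod) := by
  intro l
  induction l with
  | nil => intro a _ _; simp
  | cons pr l' ih =>
    intro a hmem hchain
    obtain ⟨H, x⟩ := pr
    have hHF : H ∈ F ∧ x ∈ Subgroup.normalizer (H : Set G) := hmem _ List.mem_cons_self
    have haH : a ∈ H := by
      have := hchain 0 (by simp)
      simpa using this
    set a' := x⁻¹ * a * x with ha'
    have ha'H : a' ∈ H := by
      have := (Subgroup.mem_normalizer_iff.mp hHF.2 a').mpr ?_
      · exact this
      · show x * a' * x⁻¹ ∈ H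
        simpa [ha', mul_assoc] using haH
    have h1 : χ a = χ a' := hH H hHF.1 a haH a' ha'H ⟨x, hHF.2, rfl⟩
    have h2 : χ a' = χ ((l'.map Prod.snd).prod⁻¹ * a' * (l'.map Prod.snd).prod) := by
      refine ih a' (fun q hq => hmem q (List.mem_cons_of_mem _ hq)) ?_
      intro i hi
      have := hchain (i + 1) (by simpa using Nat.succ_lt_succ hi)
      simpa [ha', List.take_succ_cons, mul_assoc] using this
    rw [h1, h2]
    congr 1
    simp [ha', mul_assoc]

theorem stmt16 {G : Type*} [Group G] [Fintype G] (p : ℕ) [Fact p.Prime]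
    (Gp : Sylow p G) (F : Set (Subgroup G))
    (hF : IsWeakConjFamily (Gp : Subgroup G) F)
    (χ : G → ℂ)
    (hH : ∀ H ∈ F, ∀ a ∈ H, ∀ b ∈ H,
      (∃ g ∈ Subgroup.normalizer (H : Set G), g⁻¹ * a * g = b) → χ a = χ b)
    (hGp : ∀ a ∈ (Gp : Subgroup G), ∀ b ∈ (Gp : Subgroup G),
      (∃ g ∈ Subgroup.normalizer ((Gp : Subgroup G) : Set G), g⁻¹ * a * g = b) → χ a = χ b) :
    ∀ a ∈ (Gp : Subgroup G), ∀ b ∈ (Gp : Subgroup G),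
      (∃ g : G, g⁻¹ * a * g = b) → χ a = χ b := by
  intro a ha b hb ⟨g, hg⟩
  obtain ⟨l, y, hmem, hy, hB, hchain⟩ := hF.2 {a} {b}
    (Set.singleton_subset_iff.mpr ha) (Set.singleton_subset_iff.mpr hb)
    ⟨g, by simp [hg.symm]⟩
  set P := (l.map Prod.snd).prod with hP
  have hb' : b = (P * y)⁻¹ * a * (P * y) := by
    have h := hB
    rw [Set.image_singleton] at h
    exact Set.singleton_eq_singleton_iff.mp h
  set an := P⁻¹ * a * P with han
  have h1 : χ a = χ an :=
    chain_aux χ F hH l a hmem (fun i hi => by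
      have := hchain i hi (Set.mem_image_of_mem _ rfl)
      simpa using this)
  have hban : b = y⁻¹ * an * y := by
    rw [hb', han]; group
  have hanGp : an ∈ (Gp : Subgroup G) := by
    have : y * b * y⁻¹ ∈ (Gp : Subgroup G) :=
      (Subgroup.mem_normalizer_iff.mp hy b).mp hb
    have heq : y * b * y⁻¹ = an := by rw [hban]; group
    rwa [heq] at this
  have h2 : χ an = χ b := hGp an hanGp b hb ⟨y, hy, hban.symm⟩
  rw [h1, h2]
end
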